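/- Let (X, μ) be a probability space, let (φ^t)_{t∈ℝ} be a measurable measure-preserving flow on X, and let Q : X → (0, 1] be measurable. Suppose there exist ρ > 0 and c > 0 such that e^{−c} ≤ Q(φ^t x)/Q(x) ≤ e^{c} for every x ∈ X and every t ∈ [0, ρ]. Then for every ε > 0, for μ-almost every x ∈ X: inf { e^{ε|t|} Q(φ^t x) : t ∈ ℝ } > 0. -/

import Mathlib

open MeasureTheory

namespace InfPosAux

open Filter Set Topology

variable {X : Type*} [MeasurableSpace X] {μ : Measure X}

lemma integrable_of_bound [IsFiniteMeasure μ] {f : X → ℝ} (hf : Measurable f)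
    (C : ℝ) (hC : ∀ x, |f x| ≤ C) : Integrable f μ :=
  (integrable_const C).mono' hf.aestronglyMeasurable
    (Eventually.of_forall fun x => by simpa using hC x)

/-- Garsia's maximal ergodic theorem, in the form we need. -/
lemma maximal [IsProbabilityMeasure μ] (T : X → X) (hT : MeasurePreserving T μ μ)
    (u : X → ℝ) (hu : Measurable u) (C : ℝ) (hC : ∀ x, |u x| ≤ C) :
    0 ≤ ∫ x in {x | ∃ n : ℕ, 0 < birkhoffSum T u (n + 1) x}, u x ∂μ := by
  set S : ℕ → X → ℝ := fun n => birkhoffSum T u n with hSdef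
  have hSmeas : ∀ n, Measurable (S n) := by
    intro n
    show Measurable fun x => ∑ k ∈ Finset.range n, u (T^[k] x)
    exact Finset.measurable_sum _ fun k _ => hu.comp (hT.measurable.iterate k)
  have hSbound : ∀ n x, |S n x| ≤ n * |C| := by
    intro n x
    calc |S n x| ≤ ∑ k ∈ Finset.range n, |u (T^[k] x)| := Finset.abs_sum_le_sum_abs _ _
    _ ≤ ∑ _k ∈ Finset.range n, |C| :=
        Finset.sum_le_sum fun k _ => (hC _).trans (le_abs_self C)
    _ = n * |C| := by simp [mul_comm]
  set M : ℕ → X → ℝ := fun N x => (Finset.range (N + 1)).sup' Finset.nonempty_range_add_one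
    (fun n => S n x) with hMdef
  have hMmeas : ∀ N, Measurable (M N) := by
    intro N
    have heq : M N = (Finset.range (N + 1)).sup' Finset.nonempty_range_add_one S := by
      funext x; simp [hMdef, Finset.sup'_apply]
    rw [heq]
    exact Finset.measurable_sup' _ (fun n _ => hSmeas n)
  have hM0 : ∀ N x, 0 ≤ M N x := by
    intro N x
    have : S 0 x ≤ M N x :=
      Finset.le_sup' (fun n => S n x) (Finset.mem_range.2 (Nat.succ_pos N))
    simpa [hSdef, birkhoffSum_zero] using this
  have hMbound : ∀ N x, |M N x| ≤ (N + 1) * |C| := by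
    intro N x
    obtain ⟨n, hn, hEq⟩ := Finset.exists_mem_eq_sup' (Finset.nonempty_range_add_one (n := N)) (fun n => S n x)
    rw [show M N x = S n x from hEq]
    refine (hSbound n x).trans ?_
    have : (n : ℝ) ≤ N + 1 := by exact_mod_cast (Finset.mem_range.1 hn).le
    exact mul_le_mul_of_nonneg_right this (abs_nonneg C)
  have hMint : ∀ N, Integrable (M N) μ :=
    fun N => integrable_of_bound (hMmeas N) _ (hMbound N)
  have hMTint : ∀ N, Integrable (fun x => M N (T x)) μ :=
    fun N => integrable_of_bound ((hMmeas N).comp hT.measurable) _ (fun x => hMbound N (T x))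
  -- key pointwise inequality
  have hkey : ∀ N x, 0 < M N x → M N x - M N (T x) ≤ u x := by
    intro N x hx
    obtain ⟨n, hn, hEq⟩ := Finset.exists_mem_eq_sup' (Finset.nonempty_range_add_one (n := N)) (fun n => S n x)
    rcases n with - | m
    · rw [show M N x = S 0 x from hEq] at hx; simp [hSdef, birkhoffSum_zero] at hx
    · have h1 : S (m + 1) x = u x + S m (T x) := birkhoffSum_succ' T u m x
      have h2 : S m (T x) ≤ M N (T x) := by
        refine Finset.le_sup' (fun n => S n (T x)) (Finset.mem_range.2 ?_)
        exact lt_of_le_of_lt (Nat.le_succ m) (Finset.mem_range.1 hn)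
      have : M N x = S (m + 1) x := hEq
      linarith
  set A : ℕ → Set X := fun N => {x | 0 < M N x} with hAdef
  have hAmeas : ∀ N, MeasurableSet (A N) := fun N => measurableSet_lt measurable_const (hMmeas N)
  -- M N vanishes off A N
  have hMoff : ∀ N x, x ∉ A N → M N x = 0 := by
    intro N x hx
    have := hM0 N x
    have : M N x ≤ 0 := not_lt.1 hx
    linarith [hM0 N x]
  have hstep : ∀ N, 0 ≤ ∫ x in A N, u x ∂μ := by
    intro N
    have h1 : ∫ x in A N, (M N x - M N (T x)) ∂μ ≤ ∫ x in A N, u x ∂μ := by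
      refine setIntegral_mono_on ((hMint N).sub (hMTint N)).integrableOn
        (integrable_of_bound hu C hC).integrableOn (hAmeas N) ?_
      intro x hx; exact hkey N x hx
    have h2 : ∫ x in A N, (M N x - M N (T x)) ∂μ
        = ∫ x in A N, M N x ∂μ - ∫ x in A N, M N (T x) ∂μ :=
      integral_sub (hMint N).integrableOn (hMTint N).integrableOn
    have h3 : ∫ x in A N, M N x ∂μ = ∫ x, M N x ∂μ := by
      rw [← integral_indicator (hAmeas N)]
      refine integral_congr_ae (Eventually.of_forall fun x => ?_)
      by_cases hx : x ∈ A N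
      · simp [indicator_of_mem hx]
      · simp [indicator_of_notMem hx, hMoff N x hx]
    have h4 : ∫ x in A N, M N (T x) ∂μ ≤ ∫ x, M N (T x) ∂μ :=
      setIntegral_le_integral (hMTint N) (Eventually.of_forall fun x => hM0 N (T x))
    have h5 : ∫ x, M N (T x) ∂μ = ∫ x, M N x ∂μ := by
      have := integral_map hT.measurable.aemeasurable (μ := μ) (hMmeas N).aestronglyMeasurable
      rw [hT.map_eq] at this
      exact this.symm
    linarith
  have hAmono : Monotone A := by
    intro N N' hNN' x hx
    have : M N x ≤ M N' x :=
      Finset.sup'_mono (fun n => S n x)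
        (Finset.range_subset_range.2 (Nat.succ_le_succ hNN')) Finset.nonempty_range_add_one
    exact lt_of_lt_of_le hx this
  have hAunion : ⋃ N, A N = {x | ∃ n : ℕ, 0 < S (n + 1) x} := by
    ext x
    simp only [mem_iUnion, hAdef, mem_setOf_eq]
    constructor
    · rintro ⟨N, hN⟩
      obtain ⟨n, hn, hEq⟩ := Finset.exists_mem_eq_sup' (Finset.nonempty_range_add_one (n := N))
        (fun n => S n x)
      rw [show M N x = S n x from hEq] at hN
      rcases n with - | m
      · simp [hSdef, birkhoffSum_zero] at hN
      · exact ⟨m, hN⟩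
    · rintro ⟨n, hn⟩
      refine ⟨n + 1, lt_of_lt_of_le hn ?_⟩
      exact Finset.le_sup' (fun k => S k x) (Finset.mem_range.2 (Nat.lt_succ_self _))
  have htend : Tendsto (fun N => ∫ x in A N, u x ∂μ) atTop (𝓝 (∫ x in ⋃ N, A N, u x ∂μ)) :=
    tendsto_setIntegral_of_monotone hAmeas hAmono (integrable_of_bound hu C hC).integrableOn
  have : 0 ≤ ∫ x in ⋃ N, A N, u x ∂μ := ge_of_tendsto' htend hstep
  rwa [hAunion] at this

/-- On an invariant set, the integral of the coboundary `g ∘ T - g` vanishes,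
even if `g` itself is not integrable (it is nonpositive and the coboundary is bounded). -/
lemma integral_coboundary_zero [IsProbabilityMeasure μ] (T : X → X)
    (hT : MeasurePreserving T μ μ) (g : X → ℝ) (hg : Measurable g) (hg0 : ∀ x, g x ≤ 0)
    (c : ℝ) (hstep : ∀ x, |g (T x) - g x| ≤ c)
    (B : Set X) (hB : MeasurableSet B) (hBinv : T ⁻¹' B = B) :
    ∫ x in B, (g (T x) - g x) ∂μ = 0 := by
  have hTB : MeasurePreserving T (μ.restrict B) (μ.restrict B) := by
    refine ⟨hT.measurable, ?_⟩
    calc Measure.map T (μ.restrict B) = Measure.map T (μ.restrict (T ⁻¹' B)) := by rw [hBinv]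
      _ = (Measure.map T μ).restrict B := (Measure.restrict_map hT.measurable hB).symm
      _ = μ.restrict B := by rw [hT.map_eq]
  set G : ℕ → X → ℝ := fun M x => max (g x) (-(M : ℝ)) with hGdef
  have hGmeas : ∀ M : ℕ, Measurable (G M) := fun M => hg.max measurable_const
  have hGbd : ∀ (M : ℕ) x, |G M x| ≤ (M : ℝ) := by
    intro M x
    rw [abs_le]
    constructor
    · exact le_max_right (g x) (-(M : ℝ))
    · exact max_le ((hg0 x).trans (Nat.cast_nonneg M)) (neg_le_self (Nat.cast_nonneg M))
  have key : ∀ M : ℕ, ∫ x in B, (G M (T x) - G M x) ∂μ = 0 := by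
    intro M
    have hint : Integrable (G M) (μ.restrict B) := integrable_of_bound (hGmeas M) _ (hGbd M)
    have hint' : Integrable (fun x => G M (T x)) (μ.restrict B) :=
      integrable_of_bound ((hGmeas M).comp hT.measurable) _ (fun x => hGbd M (T x))
    have h1 : ∫ x, G M (T x) ∂(μ.restrict B) = ∫ x, G M x ∂(μ.restrict B) := by
      have := integral_map (μ := μ.restrict B) hT.measurable.aemeasurable
        (hGmeas M).aestronglyMeasurable
      rw [hTB.map_eq] at this
      exact this.symm
    rw [integral_sub hint' hint, h1, sub_self]
  have hconv : Tendsto (fun M : ℕ => ∫ x in B, (G M (T x) - G M x) ∂μ) atTop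
      (𝓝 (∫ x in B, (g (T x) - g x) ∂μ)) := by
    refine tendsto_integral_of_dominated_convergence (fun _ => c)
      (fun M => (((hGmeas M).comp hT.measurable).sub (hGmeas M)).aestronglyMeasurable)
      (integrable_const c) (fun M => Eventually.of_forall fun x => ?_)
      (Eventually.of_forall fun x => ?_)
    · have h1 : |G M (T x) - G M x| ≤ |g (T x) - g x| := abs_max_sub_max_le_abs _ _ _
      simpa using h1.trans (hstep x)
    · obtain ⟨N, hN⟩ := exists_nat_ge (max (-g x) (-g (T x)))
      refine Tendsto.congr' ?_ tendsto_const_nhds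
      filter_upwards [eventually_ge_atTop N] with M hM
      have hNM : (N : ℝ) ≤ (M : ℝ) := Nat.cast_le.2 hM
      have h1 : -(M : ℝ) ≤ g x := by
        have := (le_max_left (-g x) (-g (T x))).trans (hN.trans hNM)
        linarith
      have h2 : -(M : ℝ) ≤ g (T x) := by
        have := (le_max_right (-g x) (-g (T x))).trans (hN.trans hNM)
        linarith
      simp [hGdef, max_eq_left h2, max_eq_left h1]
  have hzero : Tendsto (fun M : ℕ => ∫ x in B, (G M (T x) - G M x) ∂μ) atTop (𝓝 0) := by
    have : (fun M : ℕ => ∫ x in B, (G M (T x) - G M x) ∂μ) = fun _ => (0 : ℝ) := funext key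
    rw [this]
    exact tendsto_const_nhds
  exact tendsto_nhds_unique hconv hzero

/-- A.e. zero exponent for a nonpositive function with bounded coboundary:
the sequence `g (T^[n] x) + δ n` is bounded below for a.e. `x`. -/
lemma ae_bddBelow_orbit [IsProbabilityMeasure μ] (T : X → X) (hT : MeasurePreserving T μ μ)
    (g : X → ℝ) (hg : Measurable g) (hg0 : ∀ x, g x ≤ 0) (c : ℝ)
    (hstep : ∀ x, |g (T x) - g x| ≤ c) (δ : ℝ) (hδ : 0 < δ) :
    ∀ᵐ x ∂μ, BddBelow (Set.range fun n : ℕ => g (T^[n] x) + δ * n) := by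
  set a : X → ℕ → ℝ := fun x n => g (T^[n] x) + δ * n with hadef
  set B : Set X := {x | ∀ K : ℝ, ∃ n : ℕ, a x n < K} with hBdef
  have hameas : ∀ n : ℕ, Measurable fun x => a x n := fun n =>
    (hg.comp (hT.measurable.iterate n)).add measurable_const
  have ha0 : ∀ x, a x 0 = g x := by intro x; simp [hadef]
  have hasucc : ∀ x n, a x (n + 1) = a (T x) n + δ := by
    intro x n
    simp only [hadef, Function.iterate_succ_apply]
    push_cast; ring
  have hBmeas : MeasurableSet B := by
    have hBeq : B = ⋂ K : ℕ, ⋃ n : ℕ, {x | a x n < -(K : ℝ)} := by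
      ext x
      simp only [hBdef, mem_setOf_eq, mem_iInter, mem_iUnion]
      constructor
      · intro h K; exact h (-(K : ℝ))
      · intro h K
        obtain ⟨m, hm⟩ := exists_nat_ge (-K)
        obtain ⟨n, hn⟩ := h m
        exact ⟨n, hn.trans_le (by linarith)⟩
    rw [hBeq]
    exact MeasurableSet.iInter fun K => MeasurableSet.iUnion fun n =>
      measurableSet_lt (hameas n) measurable_const
  have hBinv : T ⁻¹' B = B := by
    ext x
    simp only [mem_preimage, hBdef, mem_setOf_eq]
    constructor
    · intro h K
      obtain ⟨n, hn⟩ := h (K - δ)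
      refine ⟨n + 1, ?_⟩
      rw [hasucc]
      linarith
    · intro h K
      obtain ⟨n, hn⟩ := h (min (K + δ) (g x))
      rcases n with - | m
      · rw [ha0] at hn
        have := min_le_right (K + δ) (g x)
        linarith
      · refine ⟨m, ?_⟩
        rw [hasucc] at hn
        have := min_le_left (K + δ) (g x)
        linarith
  have hBiff : ∀ x, T x ∈ B ↔ x ∈ B := fun x => by
    conv_rhs => rw [← hBinv]
    rfl
  have hBiter : ∀ x (k : ℕ), (T^[k] x ∈ B) ↔ x ∈ B := by
    intro x k
    induction k generalizing x with
    | zero => rfl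
    | succ m ih =>
      rw [Function.iterate_succ_apply, ih (T x), hBiff]
  set u : X → ℝ := B.indicator (fun x => g x - g (T x) - δ) with hudef
  have humeas : Measurable u := Measurable.indicator ((hg.sub (hg.comp hT.measurable)).sub
    measurable_const) hBmeas
  have hubd : ∀ x, |u x| ≤ |c| + δ := by
    intro x
    by_cases hx : x ∈ B
    · rw [hudef, indicator_of_mem hx]
      have h1 : |g x - g (T x)| ≤ |c| := by
        rw [← abs_sub_comm]; exact (hstep x).trans (le_abs_self c)
      obtain ⟨h2, h3⟩ := abs_le.1 h1
      rw [abs_le]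
      constructor <;> linarith
    · rw [hudef, indicator_of_notMem hx]
      simp
      positivity
  have husum : ∀ x ∈ B, ∀ n : ℕ, birkhoffSum T u n x = g x - g (T^[n] x) - δ * n := by
    intro x hx n
    induction n with
    | zero => simp [birkhoffSum_zero]
    | succ m ih =>
      rw [birkhoffSum_succ]
      have hmem : T^[m] x ∈ B := (hBiter x m).2 hx
      have : u (T^[m] x) = g (T^[m] x) - g (T^[m + 1] x) - δ := by
        rw [hudef, indicator_of_mem hmem, Function.iterate_succ_apply']
      rw [this, ih]
      push_cast; ring
  have husum0 : ∀ x ∉ B, ∀ n : ℕ, birkhoffSum T u n x = 0 := by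
    intro x hx n
    induction n with
    | zero => simp [birkhoffSum_zero]
    | succ m ih =>
      rw [birkhoffSum_succ, ih]
      have hmem : T^[m] x ∉ B := fun h => hx ((hBiter x m).1 h)
      rw [hudef, indicator_of_notMem hmem, add_zero]
  have hset : {x | ∃ n : ℕ, 0 < birkhoffSum T u (n + 1) x} = B := by
    ext x
    simp only [mem_setOf_eq]
    constructor
    · rintro ⟨n, hn⟩
      by_contra hx
      rw [husum0 x hx] at hn
      exact lt_irrefl _ hn
    · intro hx
      obtain ⟨n, hn⟩ := (hx : ∀ K : ℝ, ∃ n : ℕ, a x n < K) (g x)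
      rcases n with - | m
      · rw [ha0] at hn; exact absurd hn (lt_irrefl _)
      · refine ⟨m, ?_⟩
        rw [husum x hx]
        simp only [hadef] at hn
        push_cast at hn ⊢
        linarith
  have hmax : 0 ≤ ∫ x in B, u x ∂μ := by
    have := maximal (μ := μ) T hT u humeas (|c| + δ) hubd
    rwa [hset] at this
  have hcob : ∫ x in B, (g (T x) - g x) ∂μ = 0 :=
    integral_coboundary_zero T hT g hg hg0 c hstep B hBmeas hBinv
  have hint1 : Integrable (fun x => g (T x) - g x) (μ.restrict B) :=
    integrable_of_bound ((hg.comp hT.measurable).sub hg) c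
      (fun x => hstep x) |>.restrict
  have huint : ∫ x in B, u x ∂μ = ∫ x in B, (g x - g (T x) - δ) ∂μ :=
    setIntegral_congr_fun hBmeas (fun x hx => by rw [hudef, indicator_of_mem hx])
  have hsplit : ∫ x in B, (g x - g (T x) - δ) ∂μ
      = (∫ x in B, (g x - g (T x)) ∂μ) - ∫ _x in B, δ ∂μ := by
    refine integral_sub ?_ (integrable_const δ)
    have h := hint1.neg
    have heq : (-fun x => g (T x) - g x) = fun x => g x - g (T x) := by
      funext x; simp
    rwa [heq] at h
  have hneg : ∫ x in B, (g x - g (T x)) ∂μ = 0 := by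
    have : (fun x => g x - g (T x)) = fun x => -(g (T x) - g x) := by funext x; ring
    rw [this, integral_neg, hcob, neg_zero]
  have hconst : ∫ _x in B, δ ∂μ = δ * (μ B).toReal := by
    rw [setIntegral_const, smul_eq_mul, mul_comm]; rfl
  have hfinal : δ * (μ B).toReal ≤ 0 := by
    rw [huint, hsplit, hneg, hconst] at hmax
    linarith
  have ht : (μ B).toReal = 0 := by
    have : (μ B).toReal ≤ 0 := by nlinarith [ENNReal.toReal_nonneg (a := μ B)]
    exact le_antisymm this ENNReal.toReal_nonneg
  have hμB : μ B = 0 := by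
    rcases (ENNReal.toReal_eq_zero_iff _).1 ht with h | h
    · exact h
    · exact absurd h (measure_ne_top μ B)
  rw [measure_eq_zero_iff_ae_notMem] at hμB
  filter_upwards [hμB] with x hx
  have hx' : ¬ ∀ K : ℝ, ∃ n : ℕ, a x n < K := hx
  push_neg at hx'
  obtain ⟨K, hK⟩ := hx'
  exact ⟨K, by rintro y ⟨n, rfl⟩; exact hK n⟩

end InfPosAux

open Filter Set Topology

/-- For a measurable measure-preserving flow and a measurable `Q : X → (0,1]` with
a uniform ratio bound on time intervals of length `ρ`, for every `ε > 0` one has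
`inf { e^{ε|t|} Q(φ^t x) : t ∈ ℝ } > 0` for μ-a.e. `x`. -/
theorem inf_positive_ae {X : Type*} [MeasurableSpace X] (μ : Measure X)
    [IsProbabilityMeasure μ]
    (φ : ℝ → X → X) (hφmeas : Measurable (Function.uncurry φ))
    (h0 : ∀ x, φ 0 x = x)
    (hadd : ∀ s t x, φ (s + t) x = φ s (φ t x))
    (hpres : ∀ t, MeasurePreserving (φ t) μ μ)
    (Q : X → ℝ) (hQmeas : Measurable Q) (hQ : ∀ x, Q x ∈ Set.Ioc (0 : ℝ) 1)
    (ρ c : ℝ) (hρ : 0 < ρ) (hc : 0 < c)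
    (hratio : ∀ x, ∀ t ∈ Set.Icc (0 : ℝ) ρ,
      Real.exp (-c) ≤ Q (φ t x) / Q x ∧ Q (φ t x) / Q x ≤ Real.exp c)
    (ε : ℝ) (hε : 0 < ε) :
    ∀ᵐ x ∂μ, 0 < sInf {y : ℝ | ∃ t : ℝ, y = Real.exp (ε * |t|) * Q (φ t x)} := by
  set g : X → ℝ := fun x => Real.log (Q x) with hgdef
  have hQpos : ∀ x, 0 < Q x := fun x => (hQ x).1
  have hgmeas : Measurable g := Real.measurable_log.comp hQmeas
  have hg0 : ∀ x, g x ≤ 0 := fun x => Real.log_nonpos (hQpos x).le (hQ x).2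
  -- the basic two-sided estimate on intervals of length ρ
  have hlog : ∀ z, ∀ r ∈ Set.Icc (0 : ℝ) ρ,
      g z - c ≤ g (φ r z) ∧ g (φ r z) ≤ g z + c := by
    intro z r hr
    obtain ⟨hr1, hr2⟩ := hratio z r hr
    have hdiv : (0 : ℝ) < Q (φ r z) / Q z := div_pos (hQpos _) (hQpos _)
    have hld : Real.log (Q (φ r z) / Q z) = g (φ r z) - g z :=
      Real.log_div (hQpos _).ne' (hQpos _).ne'
    constructor
    · have : -c ≤ Real.log (Q (φ r z) / Q z) := (Real.le_log_iff_exp_le hdiv).2 hr1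
      rw [hld] at this; linarith
    · have : Real.log (Q (φ r z) / Q z) ≤ c := by
        rw [Real.log_le_iff_le_exp hdiv]; exact hr2
      rw [hld] at this; linarith
  have hstepρ : ∀ x, |g (φ ρ x) - g x| ≤ c := by
    intro x
    obtain ⟨h1, h2⟩ := hlog x ρ ⟨hρ.le, le_refl ρ⟩
    rw [abs_le]; constructor <;> linarith
  have hstepneg : ∀ x, |g (φ (-ρ) x) - g x| ≤ c := by
    intro x
    have hxy : φ ρ (φ (-ρ) x) = x := by rw [← hadd]; simp [h0]
    obtain ⟨h1, h2⟩ := hlog (φ (-ρ) x) ρ ⟨hρ.le, le_refl ρ⟩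
    rw [hxy] at h1 h2
    rw [abs_le]; constructor <;> linarith
  have hiterpos : ∀ (n : ℕ) x, (φ ρ)^[n] x = φ ((n : ℝ) * ρ) x := by
    intro n
    induction n with
    | zero => intro x; simp [h0]
    | succ m ih =>
      intro x
      rw [Function.iterate_succ_apply', ih x, ← hadd]
      congr 1; push_cast; ring
  have hiterneg : ∀ (n : ℕ) x, (φ (-ρ))^[n] x = φ (-((n : ℝ) * ρ)) x := by
    intro n
    induction n with
    | zero => intro x; simp [h0]
    | succ m ih =>
      intro x
      rw [Function.iterate_succ_apply', ih x, ← hadd]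
      congr 1; push_cast; ring
  set δ : ℝ := ε * ρ with hδdef
  have hδ : 0 < δ := mul_pos hε hρ
  have ae1 := InfPosAux.ae_bddBelow_orbit (μ := μ) (φ ρ) (hpres ρ) g hgmeas hg0 c hstepρ δ hδ
  have ae2 := InfPosAux.ae_bddBelow_orbit (μ := μ) (φ (-ρ)) (hpres (-ρ)) g hgmeas hg0 c hstepneg δ hδ
  filter_upwards [ae1, ae2] with x h1 h2
  obtain ⟨b₁, hb₁⟩ := h1
  obtain ⟨b₂, hb₂⟩ := h2
  have hb1 : ∀ n : ℕ, b₁ ≤ g (φ ((n : ℝ) * ρ) x) + δ * n := by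
    intro n
    have := hb₁ ⟨n, rfl⟩
    simp only [hiterpos n x] at this; exact this
  have hb2 : ∀ n : ℕ, b₂ ≤ g (φ (-((n : ℝ) * ρ)) x) + δ * n := by
    intro n
    have := hb₂ ⟨n, rfl⟩
    simp only [hiterneg n x] at this; exact this
  set b : ℝ := min b₁ b₂ - c with hbdef
  have hlb : ∀ y ∈ {y : ℝ | ∃ t : ℝ, y = Real.exp (ε * |t|) * Q (φ t x)}, Real.exp b ≤ y := by
    rintro y ⟨t, rfl⟩
    have hkey : b ≤ ε * |t| + g (φ t x) := by
      rcases le_or_gt 0 t with ht | ht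
      · -- nonnegative times
        set n : ℕ := ⌊t / ρ⌋₊ with hndef
        have hn1 : (n : ℝ) * ρ ≤ t := by
          have h := Nat.floor_le (div_nonneg ht hρ.le)
          calc (n : ℝ) * ρ ≤ t / ρ * ρ := by
                exact mul_le_mul_of_nonneg_right h hρ.le
            _ = t := div_mul_cancel₀ t hρ.ne'
        have hn2 : t < (n : ℝ) * ρ + ρ := by
          have h := Nat.lt_floor_add_one (t / ρ)
          have := (div_lt_iff₀ hρ).1 h
          linarith [this]
        have hr : t - (n : ℝ) * ρ ∈ Set.Icc (0 : ℝ) ρ := ⟨by linarith, by linarith⟩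
        have hφt : φ t x = φ (t - (n : ℝ) * ρ) (φ ((n : ℝ) * ρ) x) := by
          rw [← hadd]; congr 1; ring
        have hglow := (hlog (φ ((n : ℝ) * ρ) x) _ hr).1
        rw [← hφt] at hglow
        have hδn : δ * n ≤ ε * |t| := by
          rw [abs_of_nonneg ht]
          calc δ * n = ε * ((n : ℝ) * ρ) := by rw [hδdef]; ring
            _ ≤ ε * t := mul_le_mul_of_nonneg_left hn1 hε.le
        have := hb1 n
        have hmin := min_le_left b₁ b₂
        rw [hbdef]
        linarith
      · -- negative times
        set s : ℝ := -t with hsdef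
        have hs : 0 ≤ s := by rw [hsdef]; linarith
        set n : ℕ := ⌊s / ρ⌋₊ with hndef
        have hn1 : (n : ℝ) * ρ ≤ s := by
          have h := Nat.floor_le (div_nonneg hs hρ.le)
          calc (n : ℝ) * ρ ≤ s / ρ * ρ := mul_le_mul_of_nonneg_right h hρ.le
            _ = s := div_mul_cancel₀ s hρ.ne'
        have hn2 : s < (n : ℝ) * ρ + ρ := by
          have h := Nat.lt_floor_add_one (s / ρ)
          have := (div_lt_iff₀ hρ).1 h
          linarith [this]
        have hr : s - (n : ℝ) * ρ ∈ Set.Icc (0 : ℝ) ρ := ⟨by linarith, by linarith⟩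
        have hφt : φ t x = φ (-(s - (n : ℝ) * ρ)) (φ (-((n : ℝ) * ρ)) x) := by
          rw [← hadd]; congr 1; rw [hsdef]; ring
        -- backward interpolation: g (φ (-r) z) ≥ g z - c
        have hback : ∀ z, ∀ r ∈ Set.Icc (0 : ℝ) ρ, g z - c ≤ g (φ (-r) z) := by
          intro z r hrr
          have hzz : φ r (φ (-r) z) = z := by rw [← hadd]; simp [h0]
          have := (hlog (φ (-r) z) r hrr).2
          rw [hzz] at this
          linarith
        have hglow := hback (φ (-((n : ℝ) * ρ)) x) _ hr
        rw [← hφt] at hglow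
        have hδn : δ * n ≤ ε * |t| := by
          rw [abs_of_neg ht]
          calc δ * n = ε * ((n : ℝ) * ρ) := by rw [hδdef]; ring
            _ ≤ ε * (-t) := by
              refine mul_le_mul_of_nonneg_left ?_ hε.le
              rw [← hsdef] at *; linarith
        have := hb2 n
        have hmin := min_le_right b₁ b₂
        rw [hbdef]
        linarith
    calc Real.exp b ≤ Real.exp (ε * |t| + g (φ t x)) := Real.exp_le_exp.2 hkey
      _ = Real.exp (ε * |t|) * Real.exp (g (φ t x)) := Real.exp_add _ _
      _ = Real.exp (ε * |t|) * Q (φ t x) := by rw [hgdef, Real.exp_log (hQpos _)]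
  have hne : Set.Nonempty {y : ℝ | ∃ t : ℝ, y = Real.exp (ε * |t|) * Q (φ t x)} :=
    ⟨Real.exp (ε * |(0 : ℝ)|) * Q (φ 0 x), 0, rfl⟩
  exact lt_of_lt_of_le (Real.exp_pos b) (le_csInf hne hlb)
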